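/- Let $d_1,\dots,d_\ell$ and $d_1',\dots,d_\ell'$ be positive integers such that $\prod_{i=1}^\ell (1+t+\cdots+t^{d_i'-1})$ divides $\prod_{i=1}^\ell (1+t+\cdots+t^{d_i-1})$ in $\mathbb{Z}[t]$. Then for each positive integer $n$, the number of indices $i$ with $n \mid d_i'$ is at most the number of indices $i$ with $n \mid d_i$. -/
import Mathlib


open Polynomial Finset

lemma geom_ne_zero (d : ℕ) (hd : 0 < d) :
    (∑ j ∈ Finset.range d, (X : ℂ[X]) ^ j) ≠ 0 := by
  intro h
  have := congrArg (eval 1) h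
  simp [eval_finset_sum] at this
  omega

lemma count_root_geom {n : ℕ} (hn : 1 < n) {ζ : ℂ} (hζ : IsPrimitiveRoot ζ n)
    (d : ℕ) (hd : 0 < d) :
    (∑ j ∈ Finset.range d, (X : ℂ[X]) ^ j).roots.count ζ = if n ∣ d then 1 else 0 := by
  have hζ1 : ζ ≠ 1 := by
    intro h
    rw [h] at hζ
    have := hζ.pow_eq_one_iff_dvd 1
    simp at this
    omega
  have hmul : ((X : ℂ[X]) - 1) * ∑ j ∈ Finset.range d, (X : ℂ[X]) ^ j = X ^ d - 1 := by
    simpa using mul_geom_sum (X : ℂ[X]) d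
  have hXd : ((X : ℂ[X]) ^ d - 1) ≠ 0 := by
    rw [← hmul]
    exact mul_ne_zero (by simpa using X_sub_C_ne_zero (1 : ℂ)) (geom_ne_zero d hd)
  have hsep : ((X : ℂ[X]) ^ d - 1).Separable := by
    simpa using separable_X_pow_sub_C (1 : ℂ) (by exact_mod_cast hd.ne') one_ne_zero
  have hnodup := nodup_roots hsep
  have hroots : ((X : ℂ[X]) ^ d - 1).roots = (X - 1 : ℂ[X]).roots + (∑ j ∈ Finset.range d, (X : ℂ[X]) ^ j).roots := by
    rw [← hmul, roots_mul (hmul ▸ hXd)]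
  have hcount1 : (X - 1 : ℂ[X]).roots.count ζ = 0 := by
    have : (X - 1 : ℂ[X]) = X - C 1 := by simp
    rw [this, roots_X_sub_C]
    simp [hζ1]
  have key : (∑ j ∈ Finset.range d, (X : ℂ[X]) ^ j).roots.count ζ
      = ((X : ℂ[X]) ^ d - 1).roots.count ζ := by
    rw [hroots, Multiset.count_add, hcount1, zero_add]
  rw [key]
  by_cases hdvd : n ∣ d
  · rw [if_pos hdvd]
    have hmem : ζ ∈ ((X : ℂ[X]) ^ d - 1).roots := by
      rw [mem_roots hXd]
      simp [IsRoot, (hζ.pow_eq_one_iff_dvd d).mpr hdvd]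
    have hle := Multiset.nodup_iff_count_le_one.mp hnodup ζ
    have hge := Multiset.one_le_count_iff_mem.mpr hmem
    omega
  · rw [if_neg hdvd, Multiset.count_eq_zero]
    intro hmem
    rw [mem_roots hXd] at hmem
    simp [IsRoot] at hmem
    exact hdvd ((hζ.pow_eq_one_iff_dvd d).mp (by linear_combination hmem))


/-- If `∏ i (1 + t + ⋯ + t^(d'_i - 1))` divides `∏ i (1 + t + ⋯ + t^(d_i - 1))` in `ℤ[t]`,
then for each `n > 0` the number of indices with `n ∣ d'_i` is at most the number of
indices with `n ∣ d_i`. -/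
theorem stmt_1 (ℓ : ℕ) (d d' : Fin ℓ → ℕ) (hd : ∀ i, 0 < d i) (hd' : ∀ i, 0 < d' i)
    (hdvd : (∏ i, ∑ j ∈ Finset.range (d' i), (Polynomial.X : Polynomial ℤ) ^ j) ∣
      ∏ i, ∑ j ∈ Finset.range (d i), (Polynomial.X : Polynomial ℤ) ^ j)
    (n : ℕ) (hn : 0 < n) :
    (Finset.univ.filter fun i => n ∣ d' i).card ≤
      (Finset.univ.filter fun i => n ∣ d i).card := by
  by_cases hn1 : n = 1
  · subst hn1; simp
  have hn2 : 1 < n := by omega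
  obtain ⟨ζ, hζ⟩ : ∃ ζ : ℂ, IsPrimitiveRoot ζ n :=
    ⟨_, Complex.isPrimitiveRoot_exp n hn.ne'⟩
  have hdvdC : (∏ i, ∑ j ∈ Finset.range (d' i), (X : ℂ[X]) ^ j) ∣
      ∏ i, ∑ j ∈ Finset.range (d i), (X : ℂ[X]) ^ j := by
    have := Polynomial.map_dvd (Int.castRingHom ℂ) hdvd
    simpa [Polynomial.map_prod, Polynomial.map_sum, Polynomial.map_pow] using this
  have hP0 : (∏ i, ∑ j ∈ Finset.range (d i), (X : ℂ[X]) ^ j) ≠ 0 :=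
    Finset.prod_ne_zero_iff.mpr fun i _ => geom_ne_zero _ (hd i)
  have hP0' : (∏ i, ∑ j ∈ Finset.range (d' i), (X : ℂ[X]) ^ j) ≠ 0 :=
    Finset.prod_ne_zero_iff.mpr fun i _ => geom_ne_zero _ (hd' i)
  have key : ∀ (e : Fin ℓ → ℕ), (∀ i, 0 < e i) →
      (∏ i, ∑ j ∈ Finset.range (e i), (X : ℂ[X]) ^ j).roots.count ζ
        = (Finset.univ.filter fun i => n ∣ e i).card := by
    intro e he
    have h0 : (∏ i, ∑ j ∈ Finset.range (e i), (X : ℂ[X]) ^ j) ≠ 0 :=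
      Finset.prod_ne_zero_iff.mpr fun i _ => geom_ne_zero _ (he i)
    rw [roots_prod _ _ h0, Multiset.count_bind, Finset.card_filter]
    rw [Finset.sum]
    congr 1
    apply Multiset.map_congr rfl
    intro i _
    rw [count_root_geom hn2 hζ _ (he i)]
  have hle := roots.le_of_dvd hP0 hdvdC
  have := Multiset.count_le_of_le ζ hle
  rwa [key d hd, key d' hd'] at this
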